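/- The modified two-point kernel K₂(x,y) = (1+x²)(1+y²)/((x-y)²(1+xy)²) is invariant under D₂(λ) with the weight of a dimension-1 field: for all λ > 0 and distinct x, y ∈ (0,1), (D₂(λ))'(x) · (D₂(λ))'(y) · K₂(D₂(λ)x, D₂(λ)y) = K₂(x,y). -/

import Mathlib

/-- The stretching map ξ(x) = 2x/(1-x²). -/
noncomputable def xi (x : ℝ) : ℝ := 2 * x / (1 - x ^ 2)

/-- The inverse map ξ⁻¹(y) = (√(y²+1)-1)/y. -/
noncomputable def xiInv (y : ℝ) : ℝ := (Real.sqrt (y ^ 2 + 1) - 1) / y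

/-- The lifted dilation D₂(λ) = ξ⁻¹ ∘ D(λ) ∘ ξ on (0,1). -/
noncomputable def D2 (l x : ℝ) : ℝ := xiInv (l * xi x)

/-- The modified two-point kernel K₂(x,y) = (1+x²)(1+y²)/((x-y)²(1+xy)²). -/
noncomputable def K2 (x y : ℝ) : ℝ :=
  (1 + x ^ 2) * (1 + y ^ 2) / ((x - y) ^ 2 * (1 + x * y) ^ 2)

lemma xi_hasDerivAt {x : ℝ} (h : (1 : ℝ) - x ^ 2 ≠ 0) :
    HasDerivAt xi (2 * (1 + x ^ 2) / (1 - x ^ 2) ^ 2) x := by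
  have hnum : HasDerivAt (fun x : ℝ => 2 * x) 2 x := by
    simpa using (hasDerivAt_id x).const_mul 2
  have hden : HasDerivAt (fun x : ℝ => 1 - x ^ 2) (-(2 * x)) x := by
    have := (hasDerivAt_pow 2 x).const_sub 1
    simpa using this
  have := hnum.div hden h
  refine this.congr_deriv ?_
  symm
  field_simp
  ring

lemma xiInv_hasDerivAt {u : ℝ} (hu : 0 < u) :
    HasDerivAt xiInv ((Real.sqrt (u ^ 2 + 1) - 1) / (Real.sqrt (u ^ 2 + 1) * u ^ 2)) u := by
  set s := Real.sqrt (u ^ 2 + 1) with hs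
  have hpos : (0 : ℝ) < u ^ 2 + 1 := by positivity
  have hs0 : 0 < s := Real.sqrt_pos.mpr hpos
  have hs2 : s ^ 2 = u ^ 2 + 1 := Real.sq_sqrt (le_of_lt hpos)
  have hg : HasDerivAt (fun u : ℝ => u ^ 2 + 1) (2 * u) u := by
    simpa using (hasDerivAt_pow 2 u).add_const 1
  have hsq : HasDerivAt (fun u : ℝ => Real.sqrt (u ^ 2 + 1)) (u / s) u := by
    have h0 : u ^ 2 + 1 ≠ 0 := ne_of_gt hpos
    have := (Real.hasDerivAt_sqrt h0).comp u hg
    refine this.congr_deriv ?_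
    symm
    rw [← hs]
    field_simp
  have hnum : HasDerivAt (fun u : ℝ => Real.sqrt (u ^ 2 + 1) - 1) (u / s) u :=
    hsq.sub_const 1
  have hden : HasDerivAt (fun u : ℝ => u) 1 u := hasDerivAt_id u
  have := hnum.div hden (ne_of_gt hu)
  refine this.congr_deriv ?_
  symm
  rw [← hs]
  field_simp
  nlinarith [hs2]

lemma xi_sub (a b : ℝ) (ha : (1:ℝ) - a ^ 2 ≠ 0) (hb : (1:ℝ) - b ^ 2 ≠ 0) :
    xi a - xi b = 2 * (a - b) * (1 + a * b) / ((1 - a ^ 2) * (1 - b ^ 2)) := by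
  unfold xi
  field_simp
  ring

lemma K2_eq (a b : ℝ) (ha : a ∈ Set.Ioo (0:ℝ) 1) (hb : b ∈ Set.Ioo (0:ℝ) 1) (hab : a ≠ b) :
    2 * (1 + a ^ 2) / (1 - a ^ 2) ^ 2 * (2 * (1 + b ^ 2) / (1 - b ^ 2) ^ 2) /
      (xi a - xi b) ^ 2 = K2 a b := by
  obtain ⟨ha0, ha1⟩ := ha
  obtain ⟨hb0, hb1⟩ := hb
  have ha2 : (1:ℝ) - a ^ 2 ≠ 0 := by nlinarith
  have hb2 : (1:ℝ) - b ^ 2 ≠ 0 := by nlinarith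
  have hab' : a - b ≠ 0 := sub_ne_zero.mpr hab
  have habm : (1:ℝ) + a * b ≠ 0 := by positivity
  rw [xi_sub a b ha2 hb2]
  unfold K2
  field_simp

lemma xi_pos {x : ℝ} (hx : x ∈ Set.Ioo (0:ℝ) 1) : 0 < xi x := by
  obtain ⟨h0, h1⟩ := hx
  have : (0:ℝ) < 1 - x ^ 2 := by nlinarith
  exact div_pos (by linarith) this

lemma xi_injOn : Set.InjOn xi (Set.Ioo (0:ℝ) 1) := by
  intro a ha b hb h
  obtain ⟨ha0, ha1⟩ := ha
  obtain ⟨hb0, hb1⟩ := hb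
  have ha2 : (0:ℝ) < 1 - a ^ 2 := by nlinarith
  have hb2 : (0:ℝ) < 1 - b ^ 2 := by nlinarith
  have := xi_sub a b (ne_of_gt ha2) (ne_of_gt hb2)
  rw [h, sub_self] at this
  have hmul : 2 * (a - b) * (1 + a * b) = 0 := by
    have hne : (1 - a ^ 2) * (1 - b ^ 2) ≠ 0 := by positivity
    rw [eq_comm, div_eq_zero_iff] at this
    rcases this with h' | h'
    · exact h'
    · exact absurd h' hne
  have habm : (0:ℝ) < 1 + a * b := by positivity
  have h2 : (2:ℝ) * (a - b) = 0 ∨ (1:ℝ) + a * b = 0 := by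
    rcases mul_eq_zero.mp hmul with h' | h'
    · exact Or.inl h'
    · exact Or.inr h'
  rcases h2 with h' | h'
  · linarith
  · linarith

/-- Per-point facts about `D2`. -/
lemma D2_point (l x : ℝ) (hl : 0 < l) (hx : x ∈ Set.Ioo (0:ℝ) 1) :
    D2 l x ∈ Set.Ioo (0:ℝ) 1 ∧ xi (D2 l x) = l * xi x ∧
    deriv (D2 l) x * (2 * (1 + (D2 l x) ^ 2) / (1 - (D2 l x) ^ 2) ^ 2) =
      l * (2 * (1 + x ^ 2) / (1 - x ^ 2) ^ 2) := by
  obtain ⟨hx0, hx1⟩ := hx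
  have hx2 : (0:ℝ) < 1 - x ^ 2 := by nlinarith
  set u := l * xi x with hu_def
  have hu : 0 < u := mul_pos hl (xi_pos ⟨hx0, hx1⟩)
  set s := Real.sqrt (u ^ 2 + 1) with hs_def
  have hpos : (0 : ℝ) < u ^ 2 + 1 := by positivity
  have hs0 : 0 < s := Real.sqrt_pos.mpr hpos
  have hs2 : s ^ 2 = u ^ 2 + 1 := Real.sq_sqrt (le_of_lt hpos)
  have hs1 : 1 < s := by nlinarith
  have hD : D2 l x = (s - 1) / u := rfl
  have hD0 : 0 < D2 l x := by
    rw [hD]; exact div_pos (by linarith) hu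
  have hD1 : D2 l x < 1 := by
    rw [hD, div_lt_one hu]
    nlinarith
  have h1m : 1 - (D2 l x) ^ 2 = 2 * (s - 1) / u ^ 2 := by
    rw [hD]
    field_simp
    nlinarith
  have h1p : 1 + (D2 l x) ^ 2 = 2 * s * (s - 1) / u ^ 2 := by
    rw [hD]
    field_simp
    nlinarith
  have hxiD : xi (D2 l x) = u := by
    unfold xi
    rw [h1m, hD]
    have hs1' : s - 1 ≠ 0 := by linarith
    have hu' : u ≠ 0 := ne_of_gt hu
    field_simp
  refine ⟨⟨hD0, hD1⟩, hxiD, ?_⟩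
  -- derivative of D2 l at x
  have hxi' : HasDerivAt (fun x => l * xi x) (l * (2 * (1 + x ^ 2) / (1 - x ^ 2) ^ 2)) x :=
    (xi_hasDerivAt (ne_of_gt hx2)).const_mul l
  have hinv' : HasDerivAt xiInv ((s - 1) / (s * u ^ 2)) u := by
    have := xiInv_hasDerivAt hu
    rw [← hs_def] at this
    exact this
  have hcomp : HasDerivAt (D2 l)
      ((s - 1) / (s * u ^ 2) * (l * (2 * (1 + x ^ 2) / (1 - x ^ 2) ^ 2))) x := by
    have := hinv'.comp x hxi'
    exact this
  rw [hcomp.deriv, h1m, h1p]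
  have hs1' : s - 1 ≠ 0 := by linarith
  have hu' : u ≠ 0 := ne_of_gt hu
  have hs0' : s ≠ 0 := ne_of_gt hs0
  field_simp

/-- K₂ is invariant under D₂(λ) with the weight of a dimension-1 field. -/
theorem K2_D2_invariant (l x y : ℝ) (hl : 0 < l) (hx : x ∈ Set.Ioo (0 : ℝ) 1)
    (hy : y ∈ Set.Ioo (0 : ℝ) 1) (hxy : x ≠ y) :
    deriv (D2 l) x * deriv (D2 l) y * K2 (D2 l x) (D2 l y) = K2 x y := by
  obtain ⟨hDx, hxiDx, hdx⟩ := D2_point l x hl hx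
  obtain ⟨hDy, hxiDy, hdy⟩ := D2_point l y hl hy
  have hxixy : xi x ≠ xi y := fun h => hxy (xi_injOn hx hy h)
  have hDxy : D2 l x ≠ D2 l y := by
    intro h
    apply hxixy
    have : l * xi x = l * xi y := by rw [← hxiDx, ← hxiDy, h]
    exact mul_left_cancel₀ (ne_of_gt hl) this
  rw [← K2_eq (D2 l x) (D2 l y) hDx hDy hDxy, ← K2_eq x y hx hy hxy]
  rw [hxiDx, hxiDy]
  set a := deriv (D2 l) x
  set b := deriv (D2 l) y
  set A := 2 * (1 + (D2 l x) ^ 2) / (1 - (D2 l x) ^ 2) ^ 2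
  set B := 2 * (1 + (D2 l y) ^ 2) / (1 - (D2 l y) ^ 2) ^ 2
  set P := 2 * (1 + x ^ 2) / (1 - x ^ 2) ^ 2
  set Q := 2 * (1 + y ^ 2) / (1 - y ^ 2) ^ 2
  have hC : (l * xi x - l * xi y) ^ 2 = l ^ 2 * (xi x - xi y) ^ 2 := by ring
  rw [hC]
  have key : a * b * (A * B / (l ^ 2 * (xi x - xi y) ^ 2))
      = (a * A) * (b * B) / (l ^ 2 * (xi x - xi y) ^ 2) := by ring
  rw [key, hdx, hdy]
  have hl2 : l ^ 2 ≠ 0 := pow_ne_zero 2 (ne_of_gt hl)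
  rw [show l * P * (l * Q) = l ^ 2 * (P * Q) by ring]
  rw [mul_div_mul_left _ _ hl2]
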